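/- Fix w = (w1, w2) ∈ ℕ² and partition ℕ₀² into the four regions U_w^{00} = [0,w1)×[0,w2), U_w^{01} = [0,w1)×[w2,∞), U_w^{10} = [w1,∞)×[0,w2), U_w^{11} = [w1,∞)×[w2,∞). Then for any lacunary sequence (N_k) and any two-parameter sequence (a_{n1,n2}) of complex numbers, the oscillation seminorm satisfies O(a) ≤ 4·sup_{n1,n2} |a_{n1,n2}| + ∑_{μ ∈ {0,1}²} O_μ(a), where O_μ(a) = ( ∑_{k ∈ K_μ} sup_{N_k ≤ n1,n2 ≤ N_{k+1}} |a_{n1,n2} − a_{N_k,N_k}|² )^{1/2} and K_μ = { k : (N_k,N_k), (N_{k+1},N_{k+1}) ∈ U_w^μ }. -/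

import Mathlib

open scoped ENNReal

/-- A monotone predicate flips at most once. -/
lemma flip_subsingleton {P : ℕ → Prop} (hP : ∀ i j : ℕ, i ≤ j → P i → P j) :
    {k : ℕ | ¬ (P k ↔ P (k + 1))}.Subsingleton := by
  intro k hk l hl
  by_contra hne
  simp only [Set.mem_setOf_eq] at hk hl
  have hk' : ¬ P k ∧ P (k + 1) := by
    have := hP k (k + 1) (Nat.le_succ k); tauto
  have hl' : ¬ P l ∧ P (l + 1) := by
    have := hP l (l + 1) (Nat.le_succ l); tauto
  rcases Nat.lt_or_ge k l with h | h
  · exact hl'.1 (hP (k + 1) l h hk'.2)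
  · rcases Nat.lt_or_ge l k with h' | h'
    · exact hk'.1 (hP (l + 1) k h' hl'.2)
    · exact hne (le_antisymm h' h)

/-- `rpow 1/2` is subadditive over finite sums in `ℝ≥0∞`. -/
lemma finset_rpow_half_le {ι : Type*} (s : Finset ι) (f : ι → ℝ≥0∞) :
    (∑ i ∈ s, f i) ^ (1 / 2 : ℝ) ≤ ∑ i ∈ s, (f i) ^ (1 / 2 : ℝ) := by
  classical
  induction s using Finset.cons_induction with
  | empty => simp
  | cons i s hi ih =>
      rw [Finset.sum_cons, Finset.sum_cons]
      calc (f i + ∑ j ∈ s, f j) ^ (1 / 2 : ℝ)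
          ≤ (f i) ^ (1 / 2 : ℝ) + (∑ j ∈ s, f j) ^ (1 / 2 : ℝ) :=
            ENNReal.rpow_add_le_add_rpow _ _ (by norm_num) (by norm_num)
        _ ≤ (f i) ^ (1 / 2 : ℝ) + ∑ j ∈ s, (f j) ^ (1 / 2 : ℝ) := by gcongr

theorem oscillation_four_regions (w1 w2 : ℕ) (N : ℕ → ℕ) (τ : ℝ) (hτ : 1 < τ)
    (hlac : ∀ k : ℕ, τ * N k ≤ N (k + 1)) (a : ℕ → ℕ → ℂ)
    (hfin : (⨆ n1 : ℕ, ⨆ n2 : ℕ, (‖a n1 n2‖₊ : ℝ≥0∞)) ≠ ∞) :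
    (∑' k : ℕ,
        ⨆ n1 ∈ Set.Icc (N k) (N (k + 1)), ⨆ n2 ∈ Set.Icc (N k) (N (k + 1)),
          ((‖a n1 n2 - a (N k) (N k)‖₊ : ℝ≥0∞)) ^ 2) ^ (1 / 2 : ℝ)
    ≤ 4 * (⨆ n1 : ℕ, ⨆ n2 : ℕ, (‖a n1 n2‖₊ : ℝ≥0∞))
      + ∑ μ : Bool × Bool,
        (∑' k : {k : ℕ //
            ((N k, N k) ∈ {p : ℕ × ℕ |
              (if μ.1 then w1 ≤ p.1 else p.1 < w1) ∧
              (if μ.2 then w2 ≤ p.2 else p.2 < w2)}) ∧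
            ((N (k + 1), N (k + 1)) ∈ {p : ℕ × ℕ |
              (if μ.1 then w1 ≤ p.1 else p.1 < w1) ∧
              (if μ.2 then w2 ≤ p.2 else p.2 < w2)})},
          ⨆ n1 ∈ Set.Icc (N k.1) (N (k.1 + 1)), ⨆ n2 ∈ Set.Icc (N k.1) (N (k.1 + 1)),
            ((‖a n1 n2 - a (N k.1) (N k.1)‖₊ : ℝ≥0∞)) ^ 2) ^ (1 / 2 : ℝ) := by
  classical
  set S : ℝ≥0∞ := ⨆ n1 : ℕ, ⨆ n2 : ℕ, (‖a n1 n2‖₊ : ℝ≥0∞) with hS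
  set T : ℕ → ℝ≥0∞ := fun k =>
    ⨆ n1 ∈ Set.Icc (N k) (N (k + 1)), ⨆ n2 ∈ Set.Icc (N k) (N (k + 1)),
      ((‖a n1 n2 - a (N k) (N k)‖₊ : ℝ≥0∞)) ^ 2 with hT
  -- monotonicity of N
  have hmono : Monotone N := by
    apply monotone_nat_of_le_succ
    intro k
    have h1 : (N k : ℝ) ≤ τ * N k :=
      le_mul_of_one_le_left (by positivity) hτ.le
    exact_mod_cast h1.trans (hlac k)
  have haS : ∀ n1 n2 : ℕ, (‖a n1 n2‖₊ : ℝ≥0∞) ≤ S := fun n1 n2 =>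
    le_iSup_of_le n1 (le_iSup (fun n2 => ((‖a n1 n2‖₊ : ℝ≥0∞))) n2)
  -- pointwise bound on T
  have hTle : ∀ k, T k ≤ (2 * S) ^ 2 := by
    intro k
    refine iSup₂_le fun n1 _ => iSup₂_le fun n2 _ => ?_
    have hb : (‖a n1 n2 - a (N k) (N k)‖₊ : ℝ≥0∞) ≤ 2 * S := by
      calc (‖a n1 n2 - a (N k) (N k)‖₊ : ℝ≥0∞)
          ≤ (‖a n1 n2‖₊ : ℝ≥0∞) + (‖a (N k) (N k)‖₊ : ℝ≥0∞) := by
            exact_mod_cast nnnorm_sub_le _ _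
        _ ≤ S + S := add_le_add (haS _ _) (haS _ _)
        _ = 2 * S := (two_mul S).symm
    exact pow_le_pow_left' hb 2
  -- the four region sets
  set K : Bool × Bool → Set ℕ := fun μ => {k : ℕ |
      ((N k, N k) ∈ {p : ℕ × ℕ |
        (if μ.1 then w1 ≤ p.1 else p.1 < w1) ∧
        (if μ.2 then w2 ≤ p.2 else p.2 < w2)}) ∧
      ((N (k + 1), N (k + 1)) ∈ {p : ℕ × ℕ |
        (if μ.1 then w1 ≤ p.1 else p.1 < w1) ∧
        (if μ.2 then w2 ≤ p.2 else p.2 < w2)})} with hK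
  set B1 : Set ℕ := {k : ℕ | ¬ ((w1 ≤ N k) ↔ (w1 ≤ N (k + 1)))} with hB1
  set B2 : Set ℕ := {k : ℕ | ¬ ((w2 ≤ N k) ↔ (w2 ≤ N (k + 1)))} with hB2
  have hB1sub : B1.Subsingleton :=
    flip_subsingleton (fun i j hij h => h.trans (hmono hij))
  have hB2sub : B2.Subsingleton :=
    flip_subsingleton (fun i j hij h => h.trans (hmono hij))
  -- pointwise splitting
  have key : ∀ k, T k ≤ (B1.indicator T k + B2.indicator T k)
      + ∑ μ : Bool × Bool, (K μ).indicator T k := by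
    intro k
    by_cases h1 : (w1 ≤ N k) ↔ (w1 ≤ N (k + 1))
    · by_cases h2 : (w2 ≤ N k) ↔ (w2 ≤ N (k + 1))
      · -- k lies in K μ for μ = (decide (w1 ≤ N k), decide (w2 ≤ N k))
        set μ0 : Bool × Bool := (decide (w1 ≤ N k), decide (w2 ≤ N k)) with hμ0
        have hmem : k ∈ K μ0 := by
          simp only [hK, Set.mem_setOf_eq, hμ0]
          refine ⟨⟨?_, ?_⟩, ?_, ?_⟩
          · by_cases hw : w1 ≤ N k <;> simp [hw] <;> omega
          · by_cases hw : w2 ≤ N k <;> simp [hw] <;> omega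
          · by_cases hw : w1 ≤ N k
            · simpa [hw] using h1.mp hw
            · have h' : ¬ w1 ≤ N (k + 1) := fun h => hw (h1.mpr h)
              simp [hw]; omega
          · by_cases hw : w2 ≤ N k
            · simpa [hw] using h2.mp hw
            · have h' : ¬ w2 ≤ N (k + 1) := fun h => hw (h2.mpr h)
              simp [hw]; omega
        calc T k = (K μ0).indicator T k := (Set.indicator_of_mem hmem T).symm
          _ ≤ ∑ μ : Bool × Bool, (K μ).indicator T k :=
              Finset.single_le_sum (f := fun μ => (K μ).indicator T k)
                (fun _ _ => zero_le) (Finset.mem_univ μ0)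
          _ ≤ _ := le_add_self
      · have hmem : k ∈ B2 := h2
        calc T k = B2.indicator T k := (Set.indicator_of_mem hmem T).symm
          _ ≤ _ := by
            refine le_trans ?_ (le_add_right le_rfl)
            exact le_add_left le_rfl
    · have hmem : k ∈ B1 := h1
      calc T k = B1.indicator T k := (Set.indicator_of_mem hmem T).symm
        _ ≤ _ := by
          refine le_trans ?_ (le_add_right le_rfl)
          exact le_add_right le_rfl
  -- tsum over a subsingleton-supported indicator
  have hBad : ∀ (B : Set ℕ), B.Subsingleton → ∑' k, B.indicator T k ≤ (2 * S) ^ 2 := by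
    intro B hB
    rcases hB.eq_empty_or_singleton with h | ⟨x, h⟩
    · simp [h]
    · subst h
      rw [tsum_eq_single x (fun b hb => Set.indicator_of_notMem (by simp [hb]) T)]
      rw [Set.indicator_of_mem (Set.mem_singleton x) T]
      exact hTle x
  -- sum splitting
  have hsplit : (∑' k, T k) ≤ (4 * S) ^ 2 + ∑ μ : Bool × Bool, ∑' k, (K μ).indicator T k := by
    calc (∑' k, T k)
        ≤ ∑' k, ((B1.indicator T k + B2.indicator T k)
            + ∑ μ : Bool × Bool, (K μ).indicator T k) := ENNReal.tsum_le_tsum key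
      _ = ((∑' k, B1.indicator T k) + (∑' k, B2.indicator T k))
            + ∑' k, ∑ μ : Bool × Bool, (K μ).indicator T k := by
          rw [ENNReal.tsum_add, ENNReal.tsum_add]
      _ = ((∑' k, B1.indicator T k) + (∑' k, B2.indicator T k))
            + ∑ μ : Bool × Bool, ∑' k, (K μ).indicator T k := by
          rw [Summable.tsum_finsetSum (fun μ _ => ENNReal.summable)]
      _ ≤ (4 * S) ^ 2 + ∑ μ : Bool × Bool, ∑' k, (K μ).indicator T k := by
          gcongr
          calc (∑' k, B1.indicator T k) + (∑' k, B2.indicator T k)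
              ≤ (2 * S) ^ 2 + (2 * S) ^ 2 := add_le_add (hBad _ hB1sub) (hBad _ hB2sub)
            _ ≤ (4 * S) ^ 2 := by
                rw [mul_pow, mul_pow, ← add_mul]
                gcongr
                norm_num
  -- conclude
  have hfinal : (∑' k, T k) ^ (1 / 2 : ℝ)
      ≤ 4 * S + ∑ μ : Bool × Bool, (∑' k, (K μ).indicator T k) ^ (1 / 2 : ℝ) := by
    calc (∑' k, T k) ^ (1 / 2 : ℝ)
        ≤ ((4 * S) ^ 2 + ∑ μ : Bool × Bool, ∑' k, (K μ).indicator T k) ^ (1 / 2 : ℝ) :=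
          ENNReal.rpow_le_rpow hsplit (by norm_num)
      _ ≤ ((4 * S) ^ 2) ^ (1 / 2 : ℝ)
            + (∑ μ : Bool × Bool, ∑' k, (K μ).indicator T k) ^ (1 / 2 : ℝ) :=
          ENNReal.rpow_add_le_add_rpow _ _ (by norm_num) (by norm_num)
      _ ≤ 4 * S + ∑ μ : Bool × Bool, (∑' k, (K μ).indicator T k) ^ (1 / 2 : ℝ) := by
          gcongr
          · rw [← ENNReal.rpow_natCast (4 * S) 2, ← ENNReal.rpow_mul]
            norm_num
          · exact finset_rpow_half_le _ _
  refine hfinal.trans ?_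
  gcongr with μ _
  rw [← tsum_subtype (K μ) T]
  exact le_rfl
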